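/- arXiv:1211.1123 — 3 statements merged into one kernel-verified Lean document; each statement's English description precedes it below -/
import Mathlib

section
/- Contingent-cone property at active constraints (Remark 2.5): Under assumptions (H1) and (H2), if x ∈ S and j ∈ {1,…,k} satisfies g_j(x) = 0, then ∇g_j(x)F(x) = −(b_j(x) + c_j(x)(max(0, v_j(x)))^{2p_j}) · max(0, v_j(x)); in particular ∇g_j(x)F(x) ≤ 0 for every active constraint j. -/
open Matrix Set Filter

noncomputable section

/-- The gradient of `f : ℝⁿ → ℝ` at `x`, as the vector of partial derivatives. -/
def grad {n : ℕ} (f : (Fin n → ℝ) → ℝ) (x : Fin n → ℝ) : Fin n → ℝ :=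
  fun j => fderiv ℝ f x (Pi.single j 1)

/-- The feasible set `S`. -/
def feas {n m k : ℕ} (h : Fin m → (Fin n → ℝ) → ℝ) (g : Fin k → (Fin n → ℝ) → ℝ) :
    Set (Fin n → ℝ) :=
  {x | (∀ i, h i x = 0) ∧ (∀ j, g j x ≤ 0)}

/-- Jacobian of the equality constraints (rows `∇h_i(x)`). -/
def matA {n m : ℕ} (h : Fin m → (Fin n → ℝ) → ℝ) (x : Fin n → ℝ) :
    Matrix (Fin m) (Fin n) ℝ :=
  Matrix.of fun i => grad (h i) x

/-- Jacobian of the inequality constraints (rows `∇g_j(x)`). -/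
def matB {n k : ℕ} (g : Fin k → (Fin n → ℝ) → ℝ) (x : Fin n → ℝ) :
    Matrix (Fin k) (Fin n) ℝ :=
  Matrix.of fun j => grad (g j) x

/-- `H(x) = I − Aᵀ(AAᵀ)⁻¹A`. -/
def matH {n m : ℕ} (h : Fin m → (Fin n → ℝ) → ℝ) (x : Fin n → ℝ) :
    Matrix (Fin n) (Fin n) ℝ :=
  1 - (matA h x)ᵀ * (matA h x * (matA h x)ᵀ)⁻¹ * matA h x

/-- `Q(x) = B(x)H(x)B(x)ᵀ − diag(g(x))`. -/
def matQ {n m k : ℕ} (h : Fin m → (Fin n → ℝ) → ℝ) (g : Fin k → (Fin n → ℝ) → ℝ)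
    (x : Fin n → ℝ) : Matrix (Fin k) (Fin k) ℝ :=
  matB g x * matH h x * (matB g x)ᵀ - Matrix.diagonal (fun j => g j x)

/-- Assumption (H1). -/
def hypH1 {n m k : ℕ} (θ : (Fin n → ℝ) → ℝ) (h : Fin m → (Fin n → ℝ) → ℝ)
    (g : Fin k → (Fin n → ℝ) → ℝ) : Prop :=
  (feas h g).Nonempty ∧ ∀ x₀ ∈ feas h g, IsCompact {x ∈ feas h g | θ x ≤ θ x₀}

/-- Assumption (H2). -/
def hypH2 {n m k : ℕ} (h : Fin m → (Fin n → ℝ) → ℝ) (g : Fin k → (Fin n → ℝ) → ℝ) : Prop :=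
  ∀ x ∈ feas h g,
    LinearIndependent ℝ
      (Sum.elim (fun i : Fin m => grad (h i) x)
        (fun j : {j : Fin k // g j x = 0} => grad (g (j : Fin k)) x))

/-- `P(x) = Q(x)⁻¹ B(x) H(x)`. -/
def matP {n m k : ℕ} (h : Fin m → (Fin n → ℝ) → ℝ) (g : Fin k → (Fin n → ℝ) → ℝ)
    (x : Fin n → ℝ) : Matrix (Fin k) (Fin n) ℝ :=
  (matQ h g x)⁻¹ * matB g x * matH h x

/-- `v(x) = P(x)(∇θ(x))ᵀ`. -/
def vecv {n m k : ℕ} (θ : (Fin n → ℝ) → ℝ) (h : Fin m → (Fin n → ℝ) → ℝ)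
    (g : Fin k → (Fin n → ℝ) → ℝ) (x : Fin n → ℝ) : Fin k → ℝ :=
  (matP h g x).mulVec (grad θ x)

/-- componentwise positive part. -/
def pPart {k : ℕ} (w : Fin k → ℝ) : Fin k → ℝ := fun j => max 0 (w j)

/-- `R₃(x)`. -/
def matR3 {n k : ℕ} (b c : Fin k → (Fin n → ℝ) → ℝ) (p : Fin k → ℕ) (x : Fin n → ℝ)
    (v : Fin k → ℝ) : Matrix (Fin k) (Fin k) ℝ :=
  Matrix.diagonal (fun j => b j x + c j x * (max 0 (v j)) ^ (2 * p j))

/-- The vector field `F(x)` of (2.4), (2.5). -/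
def vecF {n m k : ℕ} (θ : (Fin n → ℝ) → ℝ) (h : Fin m → (Fin n → ℝ) → ℝ)
    (g : Fin k → (Fin n → ℝ) → ℝ)
    (R1 : (Fin n → ℝ) → Matrix (Fin n) (Fin n) ℝ)
    (R2 : (Fin n → ℝ) → Matrix (Fin k) (Fin k) ℝ)
    (a b c : Fin k → (Fin n → ℝ) → ℝ) (p : Fin k → ℕ) (x : Fin n → ℝ) : Fin n → ℝ :=
  -(((matH h x - (matP h g x)ᵀ * matQ h g x * matP h g x) * R1 x *
      (matH h x - (matP h g x)ᵀ * matQ h g x * matP h g x)).mulVec (grad θ x))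
  - ((matP h g x)ᵀ * Matrix.diagonal (fun j => g j x) *
      (R2 x * Matrix.diagonal (fun j => g j x) - Matrix.diagonal (fun j => a j x))).mulVec
        (vecv θ h g x)
  - ((matP h g x)ᵀ * matR3 b c p x (vecv θ h g x)).mulVec (pPart (vecv θ h g x))

/-- The set `Φ` of KKT points. -/
def KKTset {n m k : ℕ} (θ : (Fin n → ℝ) → ℝ) (h : Fin m → (Fin n → ℝ) → ℝ)
    (g : Fin k → (Fin n → ℝ) → ℝ) : Set (Fin n → ℝ) :=
  {x | x ∈ feas h g ∧ ∃ (lam : Fin m → ℝ) (mu : Fin k → ℝ),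
    (∀ j, 0 ≤ mu j) ∧
    grad θ x + (∑ i, lam i • grad (h i) x) + (∑ j, mu j • grad (g j) x) = 0 ∧
    (∑ j, mu j * g j x) = 0}


lemma transpose_mulVec_eq_sum {q r : ℕ} (M : Matrix (Fin q) (Fin r) ℝ) (w : Fin q → ℝ) :
    Mᵀ *ᵥ w = ∑ i, w i • (M i) := by
  funext j
  simp [Matrix.mulVec, dotProduct, Finset.sum_apply, mul_comm]
lemma matH_transpose {n m : ℕ} (h : Fin m → (Fin n → ℝ) → ℝ) (x : Fin n → ℝ) :
    (matH h x)ᵀ = matH h x := by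
  simp [matH, transpose_sub, transpose_mul, Matrix.transpose_nonsing_inv, Matrix.mul_assoc]
lemma matQ_transpose {n m k : ℕ} (h : Fin m → (Fin n → ℝ) → ℝ) (g : Fin k → (Fin n → ℝ) → ℝ)
    (x : Fin n → ℝ) : (matQ h g x)ᵀ = matQ h g x := by
  simp [matQ, transpose_sub, transpose_mul, Matrix.diagonal_transpose, matH_transpose,
    Matrix.mul_assoc]
lemma isHermitian_of_transpose {r : ℕ} {M : Matrix (Fin r) (Fin r) ℝ} (hM : Mᵀ = M) :
    M.IsHermitian := by
  ext i j
  simpa [Matrix.conjTranspose_apply] using congrFun (congrFun hM i) j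

lemma posDef_AQ {n m k : ℕ} (h : Fin m → (Fin n → ℝ) → ℝ) (g : Fin k → (Fin n → ℝ) → ℝ)
    (hH2 : hypH2 h g) (x : Fin n → ℝ) (hx : x ∈ feas h g) :
    (matA h x * (matA h x)ᵀ).PosDef ∧ (matQ h g x).PosDef := by
  classical
  have hli := hH2 x hx
  -- step 1: Aᵀ *ᵥ z = 0 → z = 0
  have hAT : ∀ z : Fin m → ℝ, (matA h x)ᵀ *ᵥ z = 0 → z = 0 := by
    intro z hz
    have hli' : LinearIndependent ℝ (fun i : Fin m => grad (h i) x) :=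
      hli.comp Sum.inl Sum.inl_injective
    have hsum : ∑ i, z i • (fun i : Fin m => grad (h i) x) i = 0 := by
      have := transpose_mulVec_eq_sum (matA h x) z
      rw [hz] at this
      exact this.symm
    have := Fintype.linearIndependent_iff.mp hli' z hsum
    funext i; exact this i
  -- step 2: A * Aᵀ pos def
  have hGpd : (matA h x * (matA h x)ᵀ).PosDef := by
    refine Matrix.PosDef.of_dotProduct_mulVec_pos ?_ ?_
    · exact isHermitian_of_transpose (by
        rw [transpose_mul, transpose_transpose])
    · intro z hz
      have hstar : star z = z := funext fun i => star_trivial _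
      have hform : star z ⬝ᵥ ((matA h x * (matA h x)ᵀ) *ᵥ z)
          = ((matA h x)ᵀ *ᵥ z) ⬝ᵥ ((matA h x)ᵀ *ᵥ z) := by
        rw [hstar, ← mulVec_mulVec, Matrix.dotProduct_mulVec, ← Matrix.mulVec_transpose]
      rw [hform]
      have hu : (matA h x)ᵀ *ᵥ z ≠ 0 := fun hc => hz (hAT z hc)
      have hnn : (0:ℝ) ≤ ((matA h x)ᵀ *ᵥ z) ⬝ᵥ ((matA h x)ᵀ *ᵥ z) :=
        Finset.sum_nonneg fun i _ => mul_self_nonneg _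
      exact lt_of_le_of_ne hnn fun hc => hu (dotProduct_self_eq_zero.mp hc.symm)
  have hGdet : IsUnit (matA h x * (matA h x)ᵀ).det :=
    isUnit_iff_ne_zero.mpr hGpd.det_pos.ne'
  -- step 3: H idempotent
  have hHH : matH h x * matH h x = matH h x := by
    unfold matH
    set A := matA h x with hA
    have hAN : A * (Aᵀ * (A * Aᵀ)⁻¹) = 1 := by
      rw [← Matrix.mul_assoc]; exact Matrix.mul_nonsing_inv _ hGdet
    have hX : (Aᵀ * (A * Aᵀ)⁻¹ * A) * (Aᵀ * (A * Aᵀ)⁻¹ * A) = Aᵀ * (A * Aᵀ)⁻¹ * A := by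
      calc (Aᵀ * (A * Aᵀ)⁻¹ * A) * (Aᵀ * (A * Aᵀ)⁻¹ * A)
          = (Aᵀ * (A * Aᵀ)⁻¹) * (A * (Aᵀ * (A * Aᵀ)⁻¹)) * A := by
            simp only [Matrix.mul_assoc]
        _ = Aᵀ * (A * Aᵀ)⁻¹ * A := by rw [hAN, Matrix.mul_one]
    simp only [Matrix.sub_mul, Matrix.mul_sub, Matrix.mul_one, Matrix.one_mul]
    rw [hX]
    abel
  -- step 4: quadratic form of Q
  set C := matH h x * (matB g x)ᵀ with hC
  have hBHB : matB g x * matH h x * (matB g x)ᵀ = Cᵀ * C := by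
    rw [hC, transpose_mul, matH_transpose, transpose_transpose]
    calc matB g x * matH h x * (matB g x)ᵀ
        = matB g x * (matH h x * matH h x) * (matB g x)ᵀ := by rw [hHH]
      _ = matB g x * matH h x * (matH h x * (matB g x)ᵀ) := by
          simp only [Matrix.mul_assoc]
  have key : ∀ z : Fin k → ℝ, star z ⬝ᵥ (matQ h g x *ᵥ z) =
      (C *ᵥ z) ⬝ᵥ (C *ᵥ z) + ∑ j, (-(g j x)) * (z j)^2 := by
    intro z
    have hstar : star z = z := funext fun i => star_trivial _
    have h1 : z ⬝ᵥ ((Cᵀ * C) *ᵥ z) = (C *ᵥ z) ⬝ᵥ (C *ᵥ z) := by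
      rw [← mulVec_mulVec, Matrix.dotProduct_mulVec, Matrix.vecMul_transpose]
    have h2 : z ⬝ᵥ (Matrix.diagonal (fun j => g j x) *ᵥ z) = -∑ j, (-(g j x)) * (z j)^2 := by
      simp only [dotProduct, Matrix.mulVec_diagonal, ← Finset.sum_neg_distrib]
      exact Finset.sum_congr rfl fun j _ => by ring
    rw [hstar, matQ, hBHB, Matrix.sub_mulVec, dotProduct_sub, h1, h2, sub_neg_eq_add]
  -- step 5: Q pos def
  have hQpd : (matQ h g x).PosDef := by
    refine Matrix.PosDef.of_dotProduct_mulVec_pos (isHermitian_of_transpose (matQ_transpose h g x)) fun z hz => ?_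
    rw [key z]
    have hS1 : (0:ℝ) ≤ (C *ᵥ z) ⬝ᵥ (C *ᵥ z) :=
      Finset.sum_nonneg fun i _ => mul_self_nonneg _
    have hS2 : (0:ℝ) ≤ ∑ j, (-(g j x)) * (z j)^2 :=
      Finset.sum_nonneg fun j _ => mul_nonneg (neg_nonneg.mpr (hx.2 j)) (sq_nonneg _)
    by_contra hc
    push_neg at hc
    have hS10 : (C *ᵥ z) ⬝ᵥ (C *ᵥ z) = 0 := le_antisymm (by linarith) hS1
    have hS20 : ∑ j, (-(g j x)) * (z j)^2 = 0 := le_antisymm (by linarith) hS2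
    have hCz : C *ᵥ z = 0 := dotProduct_self_eq_zero.mp hS10
    have hterm := (Finset.sum_eq_zero_iff_of_nonneg
      (fun j _ => mul_nonneg (neg_nonneg.mpr (hx.2 j)) (sq_nonneg (z j)))).mp hS20
    have hzj : ∀ j : Fin k, g j x ≠ 0 → z j = 0 := by
      intro j hgj
      have := hterm j (Finset.mem_univ j)
      rcases mul_eq_zero.mp this with h' | h'
      · exact absurd (neg_eq_zero.mp h') hgj
      · exact (pow_eq_zero_iff two_ne_zero).mp h'
    -- from C z = 0 : Bᵀ z in range Aᵀ
    obtain ⟨w, huw⟩ : ∃ w : Fin m → ℝ, (matB g x)ᵀ *ᵥ z = (matA h x)ᵀ *ᵥ w := by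
      refine ⟨((matA h x * (matA h x)ᵀ)⁻¹ * matA h x) *ᵥ ((matB g x)ᵀ *ᵥ z), ?_⟩
      have h0 : (1 - (matA h x)ᵀ * (matA h x * (matA h x)ᵀ)⁻¹ * matA h x) *ᵥ
          ((matB g x)ᵀ *ᵥ z) = 0 := by
        rw [mulVec_mulVec]
        exact hCz
      rw [Matrix.sub_mulVec, Matrix.one_mulVec, sub_eq_zero] at h0
      simp only [mulVec_mulVec, Matrix.mul_assoc] at h0 ⊢
      exact h0
    have hsum1 : ∑ j, z j • grad (g j) x = ∑ i, w i • grad (h i) x := by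
      have e1 := transpose_mulVec_eq_sum (matB g x) z
      have e2 := transpose_mulVec_eq_sum (matA h x) w
      rw [e1, e2] at huw
      exact huw
    -- linear independence over sum type
    have hsub : ∑ j' : {j : Fin k // g j x = 0}, z (j' : Fin k) • grad (g (j' : Fin k)) x
        = ∑ j, z j • grad (g j) x := by
      rw [← Finset.sum_subtype (Finset.univ.filter fun j : Fin k => g j x = 0)
        (by simp) (fun j => z j • grad (g j) x)]
      exact Finset.sum_filter_of_ne fun j _ hne => by
        by_contra hgj
        exact hne (by rw [hzj j hgj, zero_smul])
    have hzero := Fintype.linearIndependent_iff.mp hli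
      (Sum.elim (fun i => -(w i)) fun j' : {j : Fin k // g j x = 0} => z (j' : Fin k)) (by
        rw [Fintype.sum_sum_type]
        simp only [Sum.elim_inl, Sum.elim_inr]
        rw [hsub, hsum1]
        simp [neg_smul, Finset.sum_neg_distrib])
    apply hz
    funext j
    by_cases hgj : g j x = 0
    · simpa using hzero (Sum.inr ⟨j, hgj⟩)
    · exact hzj j hgj
  exact ⟨hGpd, hQpd⟩

lemma diag_mul_mulVec {k n : ℕ} (d : Fin k → ℝ) (X : Matrix (Fin k) (Fin n) ℝ)
    (y : Fin n → ℝ) (j : Fin k) :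
    ((Matrix.diagonal d * X) *ᵥ y) j = d j * (X *ᵥ y) j := by
  simp [Matrix.mulVec, dotProduct, Matrix.diagonal_mul, Finset.mul_sum, mul_assoc]

/-- Contingent-cone property at active constraints (Remark 2.5): if `x ∈ S` and
`gⱼ(x) = 0` then `∇gⱼ(x)F(x) = −(bⱼ(x) + cⱼ(x)(max(0,vⱼ(x)))^{2pⱼ}) max(0,vⱼ(x)) ≤ 0`. -/
theorem stmt_13
    {n m k : ℕ} (hmn : m < n)
    (θ : (Fin n → ℝ) → ℝ) (h : Fin m → (Fin n → ℝ) → ℝ) (g : Fin k → (Fin n → ℝ) → ℝ)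
    (hθ : ContDiff ℝ 2 θ) (hhC : ∀ i, ContDiff ℝ 2 (h i)) (hgC : ∀ j, ContDiff ℝ 2 (g j))
    (hH1 : hypH1 θ h g) (hH2 : hypH2 h g)
    (R1 : (Fin n → ℝ) → Matrix (Fin n) (Fin n) ℝ)
    (R2 : (Fin n → ℝ) → Matrix (Fin k) (Fin k) ℝ)
    (a b c : Fin k → (Fin n → ℝ) → ℝ) (p : Fin k → ℕ)
    (hR1C : ∀ i j, ContDiff ℝ 1 fun x => R1 x i j)
    (hR1pd : ∀ x, (R1 x).PosDef)
    (hR2C : ∀ i j, ContDiff ℝ 1 fun x => R2 x i j)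
    (hR2psd : ∀ x, (R2 x).PosSemidef)
    (haC : ∀ j, ContDiff ℝ 1 (a j)) (hbC : ∀ j, ContDiff ℝ 1 (b j))
    (hcC : ∀ j, ContDiff ℝ 1 (c j))
    (ha0 : ∀ j x, 0 ≤ a j x) (hb0 : ∀ j x, 0 ≤ b j x) (hc0 : ∀ j x, 0 ≤ c j x)
    (hbc : ∀ x ∈ feas h g, ∀ j, 0 < b j x + c j x)
    (hpd : ∀ x ∈ feas h g, (R2 x).PosDef ∨ (Matrix.diagonal fun j => a j x).PosDef)
    (hp : ∀ j, 1 ≤ p j) :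
    ∀ x ∈ feas h g, ∀ j : Fin k, g j x = 0 →
      grad (g j) x ⬝ᵥ vecF θ h g R1 R2 a b c p x =
        -((b j x + c j x * (max 0 (vecv θ h g x j)) ^ (2 * p j)) *
            max 0 (vecv θ h g x j)) ∧
      grad (g j) x ⬝ᵥ vecF θ h g R1 R2 a b c p x ≤ 0 := by
  intro x hx j hgj
  classical
  obtain ⟨hGpd, hQpd⟩ := posDef_AQ h g hH2 x hx
  have hQdet : IsUnit (matQ h g x).det := isUnit_iff_ne_zero.mpr hQpd.det_pos.ne'
  have hQ1 : matQ h g x * (matQ h g x)⁻¹ = 1 := Matrix.mul_nonsing_inv _ hQdet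
  have hQit : ((matQ h g x)⁻¹)ᵀ = (matQ h g x)⁻¹ := by
    rw [Matrix.transpose_nonsing_inv, matQ_transpose]
  have hPt : (matP h g x)ᵀ = matH h x * ((matB g x)ᵀ * (matQ h g x)⁻¹) := by
    simp [matP, Matrix.transpose_mul, matH_transpose, hQit, Matrix.mul_assoc]
  have hBPt : matB g x * (matP h g x)ᵀ
      = 1 + Matrix.diagonal (fun j' => g j' x) * (matQ h g x)⁻¹ := by
    rw [hPt]
    have e : matB g x * (matH h x * ((matB g x)ᵀ * (matQ h g x)⁻¹))
        = (matB g x * matH h x * (matB g x)ᵀ) * (matQ h g x)⁻¹ := by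
      simp only [Matrix.mul_assoc]
    rw [e]
    have hBHB : matB g x * matH h x * (matB g x)ᵀ
        = matQ h g x + Matrix.diagonal (fun j' => g j' x) := by
      rw [matQ, sub_add_cancel]
    rw [hBHB, Matrix.add_mul, hQ1]
  have hQ2 : (matQ h g x)⁻¹ * matQ h g x = 1 := Matrix.nonsing_inv_mul _ hQdet
  have hQP : matQ h g x * matP h g x = matB g x * matH h x := by
    rw [matP]
    simp only [← Matrix.mul_assoc]
    rw [hQ1, Matrix.one_mul]
  have hBM : matB g x * (matH h x - (matP h g x)ᵀ * matQ h g x * matP h g x)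
      = -(Matrix.diagonal (fun j' => g j' x) * matP h g x) := by
    rw [Matrix.mul_sub]
    have e1 : matB g x * ((matP h g x)ᵀ * matQ h g x * matP h g x)
        = (matB g x * (matP h g x)ᵀ) * (matQ h g x * matP h g x) := by
      simp only [Matrix.mul_assoc]
    rw [e1, hBPt, hQP, Matrix.add_mul, Matrix.one_mul]
    have e2 : Matrix.diagonal (fun j' => g j' x) * (matQ h g x)⁻¹ * (matB g x * matH h x)
        = Matrix.diagonal (fun j' => g j' x) * matP h g x := by
      rw [matP]
      simp only [Matrix.mul_assoc]
    rw [e2, sub_add_cancel_left]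
  set v := vecv θ h g x with hv
  set Md := matH h x - (matP h g x)ᵀ * matQ h g x * matP h g x with hMd
  have hF : vecF θ h g R1 R2 a b c p x =
      -((Md * R1 x * Md) *ᵥ grad θ x)
      - (((matP h g x)ᵀ * Matrix.diagonal (fun j' => g j' x) *
          (R2 x * Matrix.diagonal (fun j' => g j' x) -
            Matrix.diagonal (fun j' => a j' x))) *ᵥ v)
      - (((matP h g x)ᵀ * matR3 b c p x v) *ᵥ pPart v) := rfl
  have hB1 : matB g x * (Md * R1 x * Md)
      = -(Matrix.diagonal (fun j' => g j' x) * (matP h g x * (R1 x * Md))) := by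
    calc matB g x * (Md * R1 x * Md) = (matB g x * Md) * (R1 x * Md) := by
          simp only [Matrix.mul_assoc]
      _ = -(Matrix.diagonal (fun j' => g j' x) * (matP h g x * (R1 x * Md))) := by
          rw [hBM]
          simp only [Matrix.neg_mul, Matrix.mul_assoc]
  have c1 : (matB g x *ᵥ ((Md * R1 x * Md) *ᵥ grad θ x)) j = 0 := by
    rw [Matrix.mulVec_mulVec, hB1, Matrix.neg_mulVec, Pi.neg_apply, diag_mul_mulVec, hgj,
      zero_mul, neg_zero]
  have hB2 : matB g x * ((matP h g x)ᵀ * Matrix.diagonal (fun j' => g j' x) *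
        (R2 x * Matrix.diagonal (fun j' => g j' x) - Matrix.diagonal (fun j' => a j' x)))
      = Matrix.diagonal (fun j' => g j' x) *
          (R2 x * Matrix.diagonal (fun j' => g j' x) - Matrix.diagonal (fun j' => a j' x))
        + Matrix.diagonal (fun j' => g j' x) * ((matQ h g x)⁻¹ *
            (Matrix.diagonal (fun j' => g j' x) *
              (R2 x * Matrix.diagonal (fun j' => g j' x) -
                Matrix.diagonal (fun j' => a j' x)))) := by
    calc matB g x * ((matP h g x)ᵀ * Matrix.diagonal (fun j' => g j' x) *
          (R2 x * Matrix.diagonal (fun j' => g j' x) - Matrix.diagonal (fun j' => a j' x)))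
        = (matB g x * (matP h g x)ᵀ) * (Matrix.diagonal (fun j' => g j' x) *
            (R2 x * Matrix.diagonal (fun j' => g j' x) -
              Matrix.diagonal (fun j' => a j' x))) := by
          simp only [Matrix.mul_assoc]
      _ = _ := by
          rw [hBPt, Matrix.add_mul, Matrix.one_mul, Matrix.mul_assoc]
  have c2 : (matB g x *ᵥ (((matP h g x)ᵀ * Matrix.diagonal (fun j' => g j' x) *
        (R2 x * Matrix.diagonal (fun j' => g j' x) - Matrix.diagonal (fun j' => a j' x)))
          *ᵥ v)) j = 0 := by
    rw [Matrix.mulVec_mulVec, hB2, Matrix.add_mulVec, Pi.add_apply, diag_mul_mulVec,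
      diag_mul_mulVec, hgj, zero_mul, zero_mul, add_zero]
  have hB3 : matB g x * ((matP h g x)ᵀ * matR3 b c p x v)
      = matR3 b c p x v + Matrix.diagonal (fun j' => g j' x) *
          ((matQ h g x)⁻¹ * matR3 b c p x v) := by
    rw [← Matrix.mul_assoc, hBPt, Matrix.add_mul, Matrix.one_mul, Matrix.mul_assoc]
  have c3 : (matB g x *ᵥ (((matP h g x)ᵀ * matR3 b c p x v) *ᵥ pPart v)) j
      = (b j x + c j x * (max 0 (v j)) ^ (2 * p j)) * max 0 (v j) := by
    rw [Matrix.mulVec_mulVec, hB3, Matrix.add_mulVec, Pi.add_apply, diag_mul_mulVec, hgj,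
      zero_mul, add_zero]
    simp [matR3, Matrix.mulVec_diagonal, pPart]
  have hmain : grad (g j) x ⬝ᵥ vecF θ h g R1 R2 a b c p x
      = -((b j x + c j x * (max 0 (v j)) ^ (2 * p j)) * max 0 (v j)) := by
    have hrow : grad (g j) x ⬝ᵥ vecF θ h g R1 R2 a b c p x
        = (matB g x *ᵥ vecF θ h g R1 R2 a b c p x) j := rfl
    rw [hrow, hF, Matrix.mulVec_sub, Matrix.mulVec_sub, Matrix.mulVec_neg]
    simp only [Pi.sub_apply, Pi.neg_apply]
    rw [c1, c2, c3]
    ring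
  refine ⟨hmain, ?_⟩
  rw [hmain]
  have h1 : (0:ℝ) ≤ max 0 (v j) := le_max_left 0 _
  have h2 : (0:ℝ) ≤ b j x + c j x * (max 0 (v j)) ^ (2 * p j) :=
    add_nonneg (hb0 j x) (mul_nonneg (hc0 j x) (pow_nonneg h1 _))
  exact neg_nonpos.mpr (mul_nonneg h2 h1)


end
end

section
/- Global convergence of the descent algorithm (core of Theorem 3.1): Under assumptions (H1) and (H2), let λ ∈ (0,1), r > 0, x₀ ∈ S, and suppose Φ̃ := {x ∈ Φ : θ(x) ≤ θ(x₀)} is nonempty. Let (x_i)_{i≥0} be a sequence in S with θ(x_i) ≤ θ(x₀) for all i, and (s_i)_{i≥0} ⊆ [0, r] satisfy θ(x_{i+1}) ≤ θ(x_i) + λ s_i ∇θ(x_i)F(x_i) for all i. Assume in addition that for every η > 0 there exists δ_η > 0 such that for every i with x_i ∉ Φ and dist(x_i, Φ̃) ≥ η one has s_i ≥ δ_η. Then every accumulation point x* of the sequence (x_i) satisfies x* ∈ Φ. -/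
open Matrix Set Filter

noncomputable section

section ptwise

variable {n m k : ℕ} {h : Fin m → (Fin n → ℝ) → ℝ} {g : Fin k → (Fin n → ℝ) → ℝ}
  {x : Fin n → ℝ}

/-- dot product with itself is a sum of squares -/
lemma dp_self_nonneg {N : ℕ} (w : Fin N → ℝ) : 0 ≤ w ⬝ᵥ w :=
  Finset.sum_nonneg fun j _ => mul_self_nonneg _

lemma dp_self_eq_zero {N : ℕ} {w : Fin N → ℝ} (hw : w ⬝ᵥ w = 0) : w = 0 := by
  funext j
  have := Finset.sum_eq_zero_iff_of_nonneg (fun j _ => mul_self_nonneg (w j)) |>.mp hw j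
    (Finset.mem_univ j)
  have := mul_self_eq_zero.mp this
  simpa using this

lemma gram_posdef (hli : LinearIndependent ℝ
      (Sum.elim (fun i : Fin m => grad (h i) x)
        (fun j : {j : Fin k // g j x = 0} => grad (g (j : Fin k)) x))) :
    (matA h x * (matA h x)ᵀ).PosDef := by
  have hliA : LinearIndependent ℝ (fun i : Fin m => grad (h i) x) :=
    hli.comp Sum.inl Sum.inl_injective
  refine Matrix.PosDef.of_dotProduct_mulVec_pos ?_ ?_
  · have := Matrix.isHermitian_mul_conjTranspose_self (matA h x)
    simpa using this
  · intro z hz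
    have hkey : star z ⬝ᵥ (matA h x * (matA h x)ᵀ) *ᵥ z
        = (z ᵥ* matA h x) ⬝ᵥ (z ᵥ* matA h x) := by
      rw [star_trivial, ← Matrix.mulVec_mulVec, Matrix.dotProduct_mulVec,
        Matrix.mulVec_transpose]
    rw [hkey]
    rcases lt_or_eq_of_le (dp_self_nonneg (z ᵥ* matA h x)) with hlt | heq
    · exact hlt
    · exfalso
      apply hz
      have hz0 : z ᵥ* matA h x = 0 := dp_self_eq_zero heq.symm
      have hz0' : ∑ i, z i • (matA h x i) = 0 := by
        funext j
        have := congrFun hz0 j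
        simpa [Matrix.vecMul, dotProduct, Finset.sum_apply, mul_comm] using this
      funext i
      exact Fintype.linearIndependent_iff.mp hliA z hz0' i


lemma HA_eq_zero (hd : IsUnit (matA h x * (matA h x)ᵀ).det) :
    matH h x * (matA h x)ᵀ = 0 := by
  have : matH h x * (matA h x)ᵀ
      = (matA h x)ᵀ - (matA h x)ᵀ * ((matA h x * (matA h x)ᵀ)⁻¹ * (matA h x * (matA h x)ᵀ)) := by
    simp only [matH]; rw [Matrix.sub_mul, Matrix.one_mul]; simp only [Matrix.mul_assoc]
  rw [this, Matrix.nonsing_inv_mul _ hd, Matrix.mul_one, sub_self]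

lemma AH_eq_zero (hd : IsUnit (matA h x * (matA h x)ᵀ).det) :
    matA h x * matH h x = 0 := by
  have : matA h x * matH h x
      = matA h x - (matA h x * (matA h x)ᵀ) * (matA h x * (matA h x)ᵀ)⁻¹ * matA h x := by
    simp only [matH]; rw [Matrix.mul_sub, Matrix.mul_one]; simp only [Matrix.mul_assoc]
  rw [this, Matrix.mul_nonsing_inv _ hd, Matrix.one_mul, sub_self]

lemma H_symm : (matH h x)ᵀ = matH h x := by
  have hAA : (matA h x * (matA h x)ᵀ)ᵀ = matA h x * (matA h x)ᵀ := by
    rw [Matrix.transpose_mul, Matrix.transpose_transpose]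
  simp only [matH, Matrix.transpose_sub, Matrix.transpose_one, Matrix.transpose_mul,
    Matrix.transpose_transpose, Matrix.transpose_nonsing_inv, hAA, Matrix.mul_assoc]

lemma H_idem (hd : IsUnit (matA h x * (matA h x)ᵀ).det) :
    matH h x * matH h x = matH h x := by
  nth_rewrite 1 [matH]
  rw [sub_mul, one_mul, Matrix.mul_assoc, Matrix.mul_assoc, AH_eq_zero hd]
  simp

lemma H_quad (hd : IsUnit (matA h x * (matA h x)ᵀ).det) (w : Fin n → ℝ) :
    w ⬝ᵥ matH h x *ᵥ w = (matH h x *ᵥ w) ⬝ᵥ (matH h x *ᵥ w) := by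
  nth_rewrite 1 [← H_idem (h := h) (x := x) hd]
  nth_rewrite 1 [← H_symm (h := h) (x := x)]
  rw [← Matrix.mulVec_mulVec, Matrix.dotProduct_mulVec, Matrix.vecMul_transpose]

lemma H_kernel (hd : IsUnit (matA h x * (matA h x)ᵀ).det) {w : Fin n → ℝ}
    (hw : matH h x *ᵥ w = 0) :
    w = (matA h x)ᵀ *ᵥ ((matA h x * (matA h x)ᵀ)⁻¹ *ᵥ (matA h x *ᵥ w)) := by
  have h1 : matH h x *ᵥ w
      = w - (matA h x)ᵀ *ᵥ ((matA h x * (matA h x)ᵀ)⁻¹ *ᵥ (matA h x *ᵥ w)) := by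
    simp [matH, Matrix.sub_mulVec, Matrix.mulVec_mulVec, Matrix.mul_assoc]
  rw [h1] at hw
  exact sub_eq_zero.mp hw


lemma Qt_symm (hQ : (matQ h g x).PosDef) : (matQ h g x)ᵀ = matQ h g x := by
  have := hQ.1
  rwa [Matrix.IsHermitian, Matrix.conjTranspose_eq_transpose_of_trivial] at this

lemma Qinv_symm (hQ : (matQ h g x).PosDef) : ((matQ h g x)⁻¹)ᵀ = (matQ h g x)⁻¹ := by
  rw [Matrix.transpose_nonsing_inv, Qt_symm hQ]

lemma Pt_eq (hQ : (matQ h g x).PosDef) :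
    (matP h g x)ᵀ = matH h x * (matB g x)ᵀ * (matQ h g x)⁻¹ := by
  rw [matP, Matrix.transpose_mul, Matrix.transpose_mul, H_symm, Qinv_symm hQ,
    Matrix.mul_assoc]

lemma Q_quad (hd : IsUnit (matA h x * (matA h x)ᵀ).det) (z : Fin k → ℝ) :
    z ⬝ᵥ matQ h g x *ᵥ z
      = ((matH h x *ᵥ ((matB g x)ᵀ *ᵥ z)) ⬝ᵥ (matH h x *ᵥ ((matB g x)ᵀ *ᵥ z)))
        + ∑ j, (-(g j x)) * (z j * z j) := by
  have h1 : z ⬝ᵥ (matB g x * matH h x * (matB g x)ᵀ) *ᵥ z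
      = ((matB g x)ᵀ *ᵥ z) ⬝ᵥ matH h x *ᵥ ((matB g x)ᵀ *ᵥ z) := by
    rw [Matrix.mul_assoc, ← Matrix.mulVec_mulVec, Matrix.dotProduct_mulVec,
      ← Matrix.mulVec_transpose, Matrix.mulVec_mulVec]
  have h2 : z ⬝ᵥ (Matrix.diagonal (fun j => g j x)) *ᵥ z = ∑ j, g j x * (z j * z j) := by
    simp [dotProduct, Matrix.mulVec_diagonal, mul_comm, mul_assoc, mul_left_comm]
  rw [matQ, Matrix.sub_mulVec, dotProduct_sub, h1, h2, H_quad hd]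
  rw [sub_eq_add_neg, ← Finset.sum_neg_distrib]
  congr 1
  exact Finset.sum_congr rfl fun j _ => by ring

lemma Q_posdef (hx : x ∈ feas h g)
    (hli : LinearIndependent ℝ
      (Sum.elim (fun i : Fin m => grad (h i) x)
        (fun j : {j : Fin k // g j x = 0} => grad (g (j : Fin k)) x))) :
    (matQ h g x).PosDef := by
  have hd : IsUnit (matA h x * (matA h x)ᵀ).det := (gram_posdef hli).det_pos.ne'.isUnit
  refine Matrix.PosDef.of_dotProduct_mulVec_pos ?_ ?_
  · show (matQ h g x)ᴴ = matQ h g x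
    rw [Matrix.conjTranspose_eq_transpose_of_trivial, matQ, Matrix.transpose_sub,
      Matrix.transpose_mul, Matrix.transpose_mul, Matrix.transpose_transpose, H_symm,
      Matrix.diagonal_transpose, Matrix.mul_assoc]
  · intro z hz
    rw [star_trivial, Q_quad hd]
    set w := (matB g x)ᵀ *ᵥ z with hw
    have hnn1 : 0 ≤ (matH h x *ᵥ w) ⬝ᵥ (matH h x *ᵥ w) := dp_self_nonneg _
    have hnn2 : ∀ j, 0 ≤ (-(g j x)) * (z j * z j) :=
      fun j => mul_nonneg (by linarith [hx.2 j]) (mul_self_nonneg _)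
    rcases lt_or_eq_of_le (add_nonneg hnn1 (Finset.sum_nonneg fun j _ => hnn2 j)) with hlt | heq
    · exact hlt
    exfalso
    apply hz
    have hz1 : (matH h x *ᵥ w) ⬝ᵥ (matH h x *ᵥ w) = 0 := by
      have hs : 0 ≤ ∑ j, (-(g j x)) * (z j * z j) := Finset.sum_nonneg fun j _ => hnn2 j
      linarith
    have hz2 : ∑ j, (-(g j x)) * (z j * z j) = 0 := by linarith
    have hzj : ∀ j, g j x ≠ 0 → z j = 0 := by
      intro j hgj
      have := (Finset.sum_eq_zero_iff_of_nonneg (fun j _ => hnn2 j)).mp hz2 j (Finset.mem_univ j)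
      have hglt : g j x < 0 := lt_of_le_of_ne (hx.2 j) hgj
      have : z j * z j = 0 := by
        by_contra hzz
        exact hzz (by nlinarith)
      exact mul_self_eq_zero.mp this
    have hHw : matH h x *ᵥ w = 0 := dp_self_eq_zero hz1
    have hker := H_kernel hd hHw
    set c := (matA h x * (matA h x)ᵀ)⁻¹ *ᵥ (matA h x *ᵥ w) with hc
    -- w = Aᵀ *ᵥ c, i.e. ∑ j z j • grad g j - ∑ i c i • grad h i ... = 0
    have hwsum : w = ∑ j, z j • grad (g j) x := by
      rw [hw, Matrix.mulVec_transpose]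
      funext t
      simp [Matrix.vecMul, dotProduct, Finset.sum_apply, matB, mul_comm]
    have hcsum : (matA h x)ᵀ *ᵥ c = ∑ i, c i • grad (h i) x := by
      rw [Matrix.mulVec_transpose]
      funext t
      simp [Matrix.vecMul, dotProduct, Finset.sum_apply, matA, mul_comm]
    have hdep : (∑ i, (-(c i)) • grad (h i) x) + ∑ j, z j • grad (g j) x = 0 := by
      rw [← hwsum]
      have : ∑ i, (-(c i)) • grad (h i) x = -((matA h x)ᵀ *ᵥ c) := by
        rw [hcsum, ← Finset.sum_neg_distrib]
        congr 1; funext i; rw [neg_smul]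
      rw [this, hker]
      simp
    -- restrict the g-sum to active indices
    have hactive : ∑ j, z j • grad (g j) x = ∑ j : {j : Fin k // g j x = 0}, z j • grad (g (j : Fin k)) x := by
      classical
      rw [← Finset.sum_filter_of_ne (p := fun j => g j x = 0) (s := Finset.univ)]
      · exact Finset.sum_subtype _ (by simp) _
      · intro j _ hne
        by_contra hgj
        exact hne (by rw [hzj j hgj, zero_smul])
    have hcoef := Fintype.linearIndependent_iff.mp hli
        (Sum.elim (fun i => -(c i)) (fun j : {j : Fin k // g j x = 0} => z j))
        (by rw [Fintype.sum_sum_type]; simpa [hactive] using hdep)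
    funext j
    by_cases hgj : g j x = 0
    · exact hcoef (Sum.inr ⟨j, hgj⟩)
    · exact hzj j hgj

lemma dot_mulVec_symm {N : ℕ} {M : Matrix (Fin N) (Fin N) ℝ} (hM : Mᵀ = M)
    (u y : Fin N → ℝ) : u ⬝ᵥ M *ᵥ y = (M *ᵥ u) ⬝ᵥ y := by
  rw [Matrix.dotProduct_mulVec, ← Matrix.mulVec_transpose, hM]

lemma M_symm (hQ : (matQ h g x).PosDef) :
    (matH h x - (matP h g x)ᵀ * matQ h g x * matP h g x)ᵀ
      = matH h x - (matP h g x)ᵀ * matQ h g x * matP h g x := by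
  rw [Matrix.transpose_sub, H_symm, Matrix.transpose_mul, Matrix.transpose_mul,
    Matrix.transpose_transpose, Qt_symm hQ, Matrix.mul_assoc]

lemma dot_Pt (θ : (Fin n → ℝ) → ℝ) (X : Matrix (Fin k) (Fin k) ℝ) (w : Fin k → ℝ) :
    grad θ x ⬝ᵥ ((matP h g x)ᵀ * X) *ᵥ w = vecv θ h g x ⬝ᵥ (X *ᵥ w) := by
  rw [← Matrix.mulVec_mulVec, Matrix.dotProduct_mulVec, Matrix.vecMul_transpose]
  rfl

lemma diag_dot (dvec u y : Fin k → ℝ) :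
    u ⬝ᵥ (Matrix.diagonal dvec) *ᵥ y = (fun j => dvec j * u j) ⬝ᵥ y := by
  simp only [dotProduct, Matrix.mulVec_diagonal]
  exact Finset.sum_congr rfl fun j _ => by ring

lemma diag_mulVec (dvec y : Fin k → ℝ) :
    (Matrix.diagonal dvec) *ᵥ y = fun j => dvec j * y j := by
  funext j; exact Matrix.mulVec_diagonal _ _ _

lemma G_formula (θ : (Fin n → ℝ) → ℝ)
    (R1 : (Fin n → ℝ) → Matrix (Fin n) (Fin n) ℝ)
    (R2 : (Fin n → ℝ) → Matrix (Fin k) (Fin k) ℝ)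
    (a b c : Fin k → (Fin n → ℝ) → ℝ) (p : Fin k → ℕ)
    (hQ : (matQ h g x).PosDef) :
    grad θ x ⬝ᵥ vecF θ h g R1 R2 a b c p x =
      -(((matH h x - (matP h g x)ᵀ * matQ h g x * matP h g x) *ᵥ grad θ x) ⬝ᵥ
          (R1 x *ᵥ ((matH h x - (matP h g x)ᵀ * matQ h g x * matP h g x) *ᵥ grad θ x)))
      - ((fun j => g j x * vecv θ h g x j) ⬝ᵥ
          (R2 x *ᵥ (fun j => g j x * vecv θ h g x j)))
      + (∑ j, a j x * (g j x * (vecv θ h g x j * vecv θ h g x j)))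
      - (∑ j, (b j x + c j x * (max 0 (vecv θ h g x j)) ^ (2 * p j))
          * (max 0 (vecv θ h g x j)) ^ 2) := by
  set d := grad θ x with hd
  set v := vecv θ h g x with hv
  set M := matH h x - (matP h g x)ᵀ * matQ h g x * matP h g x with hM
  set wg : Fin k → ℝ := fun j => g j x * v j with hwg
  have hsplit : d ⬝ᵥ vecF θ h g R1 R2 a b c p x
      = -(d ⬝ᵥ (M * R1 x * M) *ᵥ d)
        - d ⬝ᵥ ((matP h g x)ᵀ * Matrix.diagonal (fun j => g j x) *
            (R2 x * Matrix.diagonal (fun j => g j x) - Matrix.diagonal (fun j => a j x))) *ᵥ v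
        - d ⬝ᵥ ((matP h g x)ᵀ * matR3 b c p x v) *ᵥ (pPart v) := by
    rw [vecF]
    simp only [dotProduct_sub, dotProduct_neg, ← hd, ← hv, ← hM]
  rw [hsplit]
  -- Term 1
  have hT1 : d ⬝ᵥ (M * R1 x * M) *ᵥ d = (M *ᵥ d) ⬝ᵥ (R1 x *ᵥ (M *ᵥ d)) := by
    rw [← Matrix.mulVec_mulVec, ← Matrix.mulVec_mulVec, dot_mulVec_symm (M_symm hQ)]
  -- Term 2
  have hDgv : (Matrix.diagonal (fun j => g j x)) *ᵥ v = wg := diag_mulVec _ _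
  have hT2 : d ⬝ᵥ ((matP h g x)ᵀ * Matrix.diagonal (fun j => g j x) *
        (R2 x * Matrix.diagonal (fun j => g j x) - Matrix.diagonal (fun j => a j x))) *ᵥ v
      = wg ⬝ᵥ (R2 x *ᵥ wg) - ∑ j, a j x * (g j x * (v j * v j)) := by
    rw [Matrix.mul_assoc, dot_Pt, ← Matrix.mulVec_mulVec, diag_dot,
      Matrix.sub_mulVec, ← Matrix.mulVec_mulVec, hDgv, dotProduct_sub]
    have h2b : (fun j => g j x * v j) ⬝ᵥ ((Matrix.diagonal fun j => a j x) *ᵥ v)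
        = ∑ j, a j x * (g j x * (v j * v j)) := by
      rw [diag_mulVec]
      simp only [dotProduct]
      exact Finset.sum_congr rfl fun j _ => by ring
    rw [h2b]
  -- Term 3
  have hT3 : d ⬝ᵥ ((matP h g x)ᵀ * matR3 b c p x v) *ᵥ (pPart v)
      = ∑ j, (b j x + c j x * (max 0 (v j)) ^ (2 * p j)) * (max 0 (v j)) ^ 2 := by
    rw [dot_Pt, matR3, diag_mulVec]
    simp only [dotProduct, pPart]
    refine Finset.sum_congr rfl fun j _ => ?_
    rcases le_or_gt (v j) 0 with hj | hj
    · rw [max_eq_left hj]; ring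
    · rw [max_eq_right hj.le]; ring
  rw [hT1, hT2, hT3]
  ring

lemma At_mulVec_sum (cv : Fin m → ℝ) :
    (matA h x)ᵀ *ᵥ cv = ∑ i, cv i • grad (h i) x := by
  rw [Matrix.mulVec_transpose]
  funext t
  simp [Matrix.vecMul, dotProduct, Finset.sum_apply, matA, mul_comm]

lemma Bt_mulVec_sum (z : Fin k → ℝ) :
    (matB g x)ᵀ *ᵥ z = ∑ j, z j • grad (g j) x := by
  rw [Matrix.mulVec_transpose]
  funext t
  simp [Matrix.vecMul, dotProduct, Finset.sum_apply, matB, mul_comm]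

lemma PtQ (hQ : (matQ h g x).PosDef) :
    (matP h g x)ᵀ * matQ h g x = matH h x * (matB g x)ᵀ := by
  rw [Pt_eq hQ, Matrix.mul_assoc, Matrix.nonsing_inv_mul _ hQ.det_pos.ne'.isUnit,
    Matrix.mul_one]

lemma M_mulVec (θ : (Fin n → ℝ) → ℝ) (hQ : (matQ h g x).PosDef) :
    (matH h x - (matP h g x)ᵀ * matQ h g x * matP h g x) *ᵥ grad θ x
      = matH h x *ᵥ (grad θ x - (matB g x)ᵀ *ᵥ vecv θ h g x) := by
  rw [Matrix.sub_mulVec, Matrix.mulVec_sub]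
  congr 1
  rw [PtQ hQ, Matrix.mul_assoc, ← Matrix.mulVec_mulVec, ← Matrix.mulVec_mulVec]
  rfl

lemma diag_posdef_pos {av : Fin k → ℝ} (hdd : (Matrix.diagonal av).PosDef) :
    ∀ j, 0 < av j := by
  intro j
  have hne : (Pi.single j 1 : Fin k → ℝ) ≠ 0 := by
    intro hcontra
    have := congrFun hcontra j
    simp at this
  have := hdd.dotProduct_mulVec_pos hne
  rw [star_trivial] at this
  simpa [dotProduct, Matrix.mulVec_diagonal, Pi.single_apply, Finset.sum_ite_eq',
    mul_comm] using this

lemma G_nonpos (θ : (Fin n → ℝ) → ℝ)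
    (R1 : (Fin n → ℝ) → Matrix (Fin n) (Fin n) ℝ)
    (R2 : (Fin n → ℝ) → Matrix (Fin k) (Fin k) ℝ)
    (a b c : Fin k → (Fin n → ℝ) → ℝ) (p : Fin k → ℕ)
    (hx : x ∈ feas h g) (hQ : (matQ h g x).PosDef)
    (hR1 : (R1 x).PosSemidef) (hR2 : (R2 x).PosSemidef)
    (ha0 : ∀ j, 0 ≤ a j x) (hb0 : ∀ j, 0 ≤ b j x) (hc0 : ∀ j, 0 ≤ c j x) :
    grad θ x ⬝ᵥ vecF θ h g R1 R2 a b c p x ≤ 0 := by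
  rw [G_formula θ R1 R2 a b c p hQ]
  have h1 : 0 ≤ ((matH h x - (matP h g x)ᵀ * matQ h g x * matP h g x) *ᵥ grad θ x) ⬝ᵥ
      (R1 x *ᵥ ((matH h x - (matP h g x)ᵀ * matQ h g x * matP h g x) *ᵥ grad θ x)) := by
    have := hR1.dotProduct_mulVec_nonneg ((matH h x - (matP h g x)ᵀ * matQ h g x * matP h g x) *ᵥ grad θ x)
    rwa [star_trivial] at this
  have h2 : 0 ≤ (fun j => g j x * vecv θ h g x j) ⬝ᵥ
      (R2 x *ᵥ (fun j => g j x * vecv θ h g x j)) := by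
    have := hR2.dotProduct_mulVec_nonneg (fun j => g j x * vecv θ h g x j)
    rwa [star_trivial] at this
  have h3 : ∑ j, a j x * (g j x * (vecv θ h g x j * vecv θ h g x j)) ≤ 0 :=
    Finset.sum_nonpos fun j _ => by
      nlinarith [hx.2 j, mul_nonneg (ha0 j) (mul_self_nonneg (vecv θ h g x j))]
  have h4 : 0 ≤ ∑ j, (b j x + c j x * (max 0 (vecv θ h g x j)) ^ (2 * p j))
      * (max 0 (vecv θ h g x j)) ^ 2 :=
    Finset.sum_nonneg fun j _ => mul_nonneg
      (add_nonneg (hb0 j) (mul_nonneg (hc0 j) (pow_nonneg (le_max_left 0 _) _)))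
      (sq_nonneg _)
  linarith

lemma G_zero_KKT (θ : (Fin n → ℝ) → ℝ)
    (R1 : (Fin n → ℝ) → Matrix (Fin n) (Fin n) ℝ)
    (R2 : (Fin n → ℝ) → Matrix (Fin k) (Fin k) ℝ)
    (a b c : Fin k → (Fin n → ℝ) → ℝ) (p : Fin k → ℕ)
    (hx : x ∈ feas h g) (hQ : (matQ h g x).PosDef)
    (hd : IsUnit (matA h x * (matA h x)ᵀ).det)
    (hR1 : (R1 x).PosDef) (hR2 : (R2 x).PosSemidef)
    (ha0 : ∀ j, 0 ≤ a j x) (hb0 : ∀ j, 0 ≤ b j x) (hc0 : ∀ j, 0 ≤ c j x)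
    (hbc : ∀ j, 0 < b j x + c j x)
    (hpd : (R2 x).PosDef ∨ (Matrix.diagonal fun j => a j x).PosDef)
    (hG : grad θ x ⬝ᵥ vecF θ h g R1 R2 a b c p x = 0) :
    x ∈ KKTset θ h g := by
  rw [G_formula θ R1 R2 a b c p hQ] at hG
  set d := grad θ x with hdd
  set v := vecv θ h g x with hvv
  set u := (matH h x - (matP h g x)ᵀ * matQ h g x * matP h g x) *ᵥ d with huu
  set wg : Fin k → ℝ := fun j => g j x * v j with hwg
  -- nonnegativity of the four pieces
  have h1 : 0 ≤ u ⬝ᵥ (R1 x *ᵥ u) := by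
    have := hR1.posSemidef.dotProduct_mulVec_nonneg u; rwa [star_trivial] at this
  have h2 : 0 ≤ wg ⬝ᵥ (R2 x *ᵥ wg) := by
    have := hR2.dotProduct_mulVec_nonneg wg; rwa [star_trivial] at this
  have h3 : ∀ j, a j x * (g j x * (v j * v j)) ≤ 0 := fun j => by
    nlinarith [hx.2 j, mul_nonneg (ha0 j) (mul_self_nonneg (v j))]
  have h3s : ∑ j, a j x * (g j x * (v j * v j)) ≤ 0 := Finset.sum_nonpos fun j _ => h3 j
  have h4 : ∀ j, 0 ≤ (b j x + c j x * (max 0 (v j)) ^ (2 * p j)) * (max 0 (v j)) ^ 2 :=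
    fun j => mul_nonneg
      (add_nonneg (hb0 j) (mul_nonneg (hc0 j) (pow_nonneg (le_max_left 0 _) _))) (sq_nonneg _)
  have h4s : 0 ≤ ∑ j, (b j x + c j x * (max 0 (v j)) ^ (2 * p j)) * (max 0 (v j)) ^ 2 :=
    Finset.sum_nonneg fun j _ => h4 j
  -- each piece vanishes
  have e1 : u ⬝ᵥ (R1 x *ᵥ u) = 0 := by linarith
  have e2 : wg ⬝ᵥ (R2 x *ᵥ wg) = 0 := by linarith
  have e3 : ∑ j, a j x * (g j x * (v j * v j)) = 0 := by linarith
  have e4 : ∑ j, (b j x + c j x * (max 0 (v j)) ^ (2 * p j)) * (max 0 (v j)) ^ 2 = 0 := by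
    linarith
  -- u = 0
  have hu0 : u = 0 := by
    by_contra hu
    exact absurd e1 (by have := hR1.dotProduct_mulVec_pos hu; rw [star_trivial] at this; linarith)
  -- v ≤ 0
  have hvle : ∀ j, v j ≤ 0 := by
    intro j
    by_contra hvj
    push_neg at hvj
    have hmax : max 0 (v j) = v j := max_eq_right hvj.le
    have hterm := (Finset.sum_eq_zero_iff_of_nonneg (fun j _ => h4 j)).mp e4 j
      (Finset.mem_univ j)
    rw [hmax] at hterm
    have hpos : 0 < b j x + c j x * v j ^ (2 * p j) := by
      rcases lt_or_eq_of_le (hb0 j) with hb | hb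
      · have : 0 ≤ c j x * v j ^ (2 * p j) := mul_nonneg (hc0 j) (by positivity)
        linarith
      · have hcpos : 0 < c j x := by have := hbc j; linarith
        have : 0 < c j x * v j ^ (2 * p j) := mul_pos hcpos (by positivity)
        linarith
    have : v j ^ 2 = 0 := by
      rcases mul_eq_zero.mp hterm with hcon | hok
      · linarith
      · exact hok
    exact hvj.ne' (by nlinarith)
  -- g j x * v j = 0 for all j
  have hgv : ∀ j, g j x * v j = 0 := by
    rcases hpd with hR2pd | hapd
    · have hwg0 : wg = 0 := by
        by_contra hw
        exact absurd e2 (by have := hR2pd.dotProduct_mulVec_pos hw; rw [star_trivial] at this; linarith)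
      intro j; exact congrFun hwg0 j
    · intro j
      have haj := diag_posdef_pos hapd j
      have hterm := (Finset.sum_eq_zero_iff_of_nonpos (fun j _ => h3 j)).mp e3 j
        (Finset.mem_univ j)
      have : g j x * (v j * v j) = 0 := by
        rcases mul_eq_zero.mp hterm with hcon | hok
        · exact absurd hcon haj.ne'
        · exact hok
      rcases mul_eq_zero.mp this with hg0 | hv0
      · rw [hg0, zero_mul]
      · rw [mul_self_eq_zero.mp hv0, mul_zero]
  -- build the multipliers
  have hMd : matH h x *ᵥ (d - (matB g x)ᵀ *ᵥ v) = 0 := by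
    rw [← M_mulVec θ hQ]; exact hu0
  have hker := H_kernel hd hMd
  set cv := (matA h x * (matA h x)ᵀ)⁻¹ *ᵥ (matA h x *ᵥ (d - (matB g x)ᵀ *ᵥ v)) with hcv
  refine ⟨hx, fun i => -(cv i), fun j => -(v j), fun j => by simpa using neg_nonneg.mpr (hvle j), ?_, ?_⟩
  · have hsum1 : ∑ i, (-(cv i)) • grad (h i) x = -((matA h x)ᵀ *ᵥ cv) := by
      rw [At_mulVec_sum, ← Finset.sum_neg_distrib]
      exact Finset.sum_congr rfl fun i _ => neg_smul _ _
    have hsum2 : ∑ j, (-(v j)) • grad (g j) x = -((matB g x)ᵀ *ᵥ v) := by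
      rw [Bt_mulVec_sum, ← Finset.sum_neg_distrib]
      exact Finset.sum_congr rfl fun j _ => neg_smul _ _
    rw [hsum1, hsum2]
    have := hker
    funext t
    have ht := congrFun this t
    simp only [Pi.sub_apply] at ht
    simp only [Pi.add_apply, Pi.neg_apply, Pi.zero_apply]
    linarith
  · refine Finset.sum_eq_zero fun j _ => ?_
    show -v j * g j x = 0
    linear_combination -hgv j

lemma KKT_G_zero (θ : (Fin n → ℝ) → ℝ)
    (R1 : (Fin n → ℝ) → Matrix (Fin n) (Fin n) ℝ)
    (R2 : (Fin n → ℝ) → Matrix (Fin k) (Fin k) ℝ)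
    (a b c : Fin k → (Fin n → ℝ) → ℝ) (p : Fin k → ℕ)
    (hQ : (matQ h g x).PosDef)
    (hd : IsUnit (matA h x * (matA h x)ᵀ).det)
    (hxK : x ∈ KKTset θ h g) :
    grad θ x ⬝ᵥ vecF θ h g R1 R2 a b c p x = 0 := by
  obtain ⟨hx, lamm, mu, hmu0, heq, hsum⟩ := hxK
  -- each mu j * g j x = 0
  have hmug : ∀ j, mu j * g j x = 0 := by
    intro j
    have hterm : ∀ j ∈ Finset.univ, mu j * g j x ≤ 0 :=
      fun j _ => mul_nonpos_iff.mpr (Or.inl ⟨hmu0 j, hx.2 j⟩)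
    exact (Finset.sum_eq_zero_iff_of_nonpos hterm).mp hsum j (Finset.mem_univ j)
  set d := grad θ x with hdd
  -- d = -(Aᵀ lamm) - (Bᵀ mu)
  have hdeq : d = -((matA h x)ᵀ *ᵥ lamm) - ((matB g x)ᵀ *ᵥ mu) := by
    rw [At_mulVec_sum, Bt_mulVec_sum]
    funext t
    have := congrFun heq t
    simp only [Pi.add_apply, Pi.zero_apply] at this
    simp only [Pi.sub_apply, Pi.neg_apply]
    linarith
  -- H d = -(H Bᵀ mu)
  have hHd : matH h x *ᵥ d = -(matH h x *ᵥ ((matB g x)ᵀ *ᵥ mu)) := by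
    rw [hdeq, Matrix.mulVec_sub, Matrix.mulVec_neg, Matrix.mulVec_mulVec, HA_eq_zero hd]
    simp
  -- v = -mu
  have hBHBt : (matB g x * matH h x * (matB g x)ᵀ) *ᵥ mu = matQ h g x *ᵥ mu := by
    have : matB g x * matH h x * (matB g x)ᵀ
        = matQ h g x + Matrix.diagonal (fun j => g j x) := by
      rw [matQ, sub_add_cancel]
    rw [this, Matrix.add_mulVec]
    have hDgmu : Matrix.diagonal (fun j => g j x) *ᵥ mu = 0 := by
      rw [diag_mulVec]
      funext j
      have := hmug j
      simp only [Pi.zero_apply]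
      linarith [hmug j]
    rw [hDgmu, add_zero]
  have hv : vecv θ h g x = -mu := by
    show (matP h g x) *ᵥ d = -mu
    rw [matP, ← Matrix.mulVec_mulVec, ← Matrix.mulVec_mulVec, hHd, Matrix.mulVec_neg,
      Matrix.mulVec_mulVec, Matrix.mulVec_mulVec, hBHBt, Matrix.mulVec_neg,
      Matrix.mulVec_mulVec, Matrix.nonsing_inv_mul _ hQ.det_pos.ne'.isUnit,
      Matrix.one_mulVec]
  rw [G_formula θ R1 R2 a b c p hQ]
  set v := vecv θ h g x with hvv
  have hvj : ∀ j, v j = -(mu j) := fun j => by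
    have := congrFun hv j
    simpa using this
  -- term 4 vanishes
  have e4 : ∑ j, (b j x + c j x * (max 0 (v j)) ^ (2 * p j)) * (max 0 (v j)) ^ 2 = 0 := by
    refine Finset.sum_eq_zero fun j _ => ?_
    have : max 0 (v j) = 0 := max_eq_left (by rw [hvj j]; linarith [hmu0 j])
    rw [this]
    ring
  -- term 3 vanishes
  have e3 : ∑ j, a j x * (g j x * (v j * v j)) = 0 := by
    refine Finset.sum_eq_zero fun j _ => ?_
    have hgvj : g j x * v j = 0 := by rw [hvj j]; linear_combination -hmug j
    linear_combination (a j x * v j) * hgvj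
  -- term 2 vanishes
  have hwg0 : (fun j => g j x * v j) = (0 : Fin k → ℝ) := by
    funext j
    have hgvj : g j x * v j = 0 := by rw [hvj j]; linear_combination -hmug j
    simpa using hgvj
  have e2 : (fun j => g j x * v j) ⬝ᵥ (R2 x *ᵥ (fun j => g j x * v j)) = 0 := by
    rw [hwg0]
    simp
  -- term 1 vanishes
  have e1 : (matH h x - (matP h g x)ᵀ * matQ h g x * matP h g x) *ᵥ d = 0 := by
    rw [M_mulVec θ hQ, ← hvv, hv, Matrix.mulVec_sub, hHd, Matrix.mulVec_neg,
      Matrix.mulVec_neg]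
    simp
  rw [← hdd, e1]
  simp only [zero_dotProduct, dotProduct_zero, neg_zero, zero_sub]
  rw [e2, e3, e4]
  ring

end ptwise

section continuity

variable {X : Type*} [TopologicalSpace X]

lemma ca_mul {l m' n' : ℕ} {f : X → Matrix (Fin l) (Fin m') ℝ}
    {g' : X → Matrix (Fin m') (Fin n') ℝ} {x₀ : X}
    (hf : ContinuousAt f x₀) (hg : ContinuousAt g' x₀) :
    ContinuousAt (fun x => f x * g' x) x₀ :=
  ((continuous_fst.matrix_mul continuous_snd).continuousAt).comp (hf.prodMk hg)

lemma ca_mulVec {l m' : ℕ} {f : X → Matrix (Fin l) (Fin m') ℝ} {v : X → Fin m' → ℝ} {x₀ : X}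
    (hf : ContinuousAt f x₀) (hv : ContinuousAt v x₀) :
    ContinuousAt (fun x => f x *ᵥ v x) x₀ :=
  ((continuous_fst.matrix_mulVec continuous_snd).continuousAt).comp (hf.prodMk hv)

lemma ca_dotProduct {m' : ℕ} {u v : X → Fin m' → ℝ} {x₀ : X}
    (hu : ContinuousAt u x₀) (hv : ContinuousAt v x₀) :
    ContinuousAt (fun x => u x ⬝ᵥ v x) x₀ :=
  ((continuous_fst.dotProduct continuous_snd).continuousAt).comp (hu.prodMk hv)

lemma ca_transpose {l m' : ℕ} {f : X → Matrix (Fin l) (Fin m') ℝ} {x₀ : X}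
    (hf : ContinuousAt f x₀) : ContinuousAt (fun x => (f x)ᵀ) x₀ :=
  ((continuous_id.matrix_transpose).continuousAt).comp hf

lemma ca_diagonal {m' : ℕ} {f : X → Fin m' → ℝ} {x₀ : X}
    (hf : ContinuousAt f x₀) : ContinuousAt (fun x => Matrix.diagonal (f x)) x₀ :=
  ((continuous_id.matrix_diagonal).continuousAt).comp hf

lemma ca_inv {N : ℕ} {f : X → Matrix (Fin N) (Fin N) ℝ} {x₀ : X}
    (hf : ContinuousAt f x₀) (hdet : (f x₀).det ≠ 0) :
    ContinuousAt (fun x => (f x)⁻¹) x₀ := by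
  refine (continuousAt_matrix_inv (f x₀) ?_).comp hf
  rw [Ring.inverse_eq_inv']
  exact continuousAt_inv₀ hdet

lemma grad_continuous {n : ℕ} {f : (Fin n → ℝ) → ℝ} (hf : ContDiff ℝ 2 f) :
    Continuous (grad f) := by
  have h1 : Continuous (fderiv ℝ f) := hf.continuous_fderiv (by norm_num)
  refine continuous_pi fun j => ?_
  exact (ContinuousLinearMap.apply ℝ ℝ (Pi.single j 1)).continuous.comp h1

lemma matA_continuous {n m : ℕ} {h : Fin m → (Fin n → ℝ) → ℝ}
    (hh : ∀ i, ContDiff ℝ 2 (h i)) : Continuous (matA h) := by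
  refine continuous_matrix fun i j => ?_
  exact (continuous_apply j).comp (grad_continuous (hh i))

lemma matB_continuous {n k : ℕ} {g : Fin k → (Fin n → ℝ) → ℝ}
    (hg : ∀ j, ContDiff ℝ 2 (g j)) : Continuous (matB g) := by
  refine continuous_matrix fun i j => ?_
  exact (continuous_apply j).comp (grad_continuous (hg i))

lemma G_continuousAt {n m k : ℕ} {θ : (Fin n → ℝ) → ℝ} {h : Fin m → (Fin n → ℝ) → ℝ}
    {g : Fin k → (Fin n → ℝ) → ℝ}
    {R1 : (Fin n → ℝ) → Matrix (Fin n) (Fin n) ℝ}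
    {R2 : (Fin n → ℝ) → Matrix (Fin k) (Fin k) ℝ}
    {a b c : Fin k → (Fin n → ℝ) → ℝ} {p : Fin k → ℕ} {xs : Fin n → ℝ}
    (hθ : ContDiff ℝ 2 θ) (hhC : ∀ i, ContDiff ℝ 2 (h i)) (hgC : ∀ j, ContDiff ℝ 2 (g j))
    (hR1C : ∀ i j, ContDiff ℝ 1 fun x => R1 x i j)
    (hR2C : ∀ i j, ContDiff ℝ 1 fun x => R2 x i j)
    (haC : ∀ j, ContDiff ℝ 1 (a j)) (hbC : ∀ j, ContDiff ℝ 1 (b j))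
    (hcC : ∀ j, ContDiff ℝ 1 (c j))
    (hdetA : (matA h xs * (matA h xs)ᵀ).det ≠ 0)
    (hdetQ : (matQ h g xs).det ≠ 0) :
    ContinuousAt (fun x => grad θ x ⬝ᵥ vecF θ h g R1 R2 a b c p x) xs := by
  have cgθ : ContinuousAt (grad θ) xs := (grad_continuous hθ).continuousAt
  have cA : ContinuousAt (matA h) xs := (matA_continuous hhC).continuousAt
  have cB : ContinuousAt (matB g) xs := (matB_continuous hgC).continuousAt
  have cgv : ContinuousAt (fun x => fun j => g j x) xs :=
    (continuous_pi fun j => (hgC j).continuous).continuousAt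
  have cav : ContinuousAt (fun x => fun j => a j x) xs :=
    (continuous_pi fun j => (haC j).continuous).continuousAt
  have cR1 : ContinuousAt R1 xs :=
    (continuous_matrix fun i j => (hR1C i j).continuous).continuousAt
  have cR2 : ContinuousAt R2 xs :=
    (continuous_matrix fun i j => (hR2C i j).continuous).continuousAt
  have cH : ContinuousAt (matH h) xs := by
    have : ContinuousAt (fun x => (1 : Matrix (Fin n) (Fin n) ℝ)
        - (matA h x)ᵀ * (matA h x * (matA h x)ᵀ)⁻¹ * matA h x) xs :=
      continuousAt_const.sub
        (ca_mul (ca_mul (ca_transpose cA) (ca_inv (ca_mul cA (ca_transpose cA)) hdetA)) cA)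
    exact this
  have cQ : ContinuousAt (matQ h g) xs := by
    have : ContinuousAt (fun x => matB g x * matH h x * (matB g x)ᵀ
        - Matrix.diagonal (fun j => g j x)) xs :=
      (ca_mul (ca_mul cB cH) (ca_transpose cB)).sub (ca_diagonal cgv)
    exact this
  have cQi : ContinuousAt (fun x => (matQ h g x)⁻¹) xs := ca_inv cQ hdetQ
  have cP : ContinuousAt (matP h g) xs := ca_mul (ca_mul cQi cB) cH
  have cv : ContinuousAt (fun x => vecv θ h g x) xs := ca_mulVec cP cgθ
  have cvj : ∀ j, ContinuousAt (fun x => vecv θ h g x j) xs :=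
    fun j => (continuous_apply j).continuousAt.comp cv
  have cvp : ContinuousAt (fun x => pPart (vecv θ h g x)) xs := by
    refine continuousAt_pi.mpr fun j => ?_
    exact continuousAt_const.max (cvj j)
  have cR3 : ContinuousAt (fun x => matR3 b c p x (vecv θ h g x)) xs := by
    refine ca_diagonal (continuousAt_pi.mpr fun j => ?_)
    exact ((hbC j).continuous.continuousAt).add
      (((hcC j).continuous.continuousAt).mul ((continuousAt_const.max (cvj j)).pow _))
  have cM : ContinuousAt (fun x => matH h x - (matP h g x)ᵀ * matQ h g x * matP h g x) xs :=
    cH.sub (ca_mul (ca_mul (ca_transpose cP) cQ) cP)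
  have cF : ContinuousAt (fun x => vecF θ h g R1 R2 a b c p x) xs := by
    have c1 : ContinuousAt (fun x => ((matH h x - (matP h g x)ᵀ * matQ h g x * matP h g x)
        * R1 x * (matH h x - (matP h g x)ᵀ * matQ h g x * matP h g x)).mulVec (grad θ x)) xs :=
      ca_mulVec (ca_mul (ca_mul cM cR1) cM) cgθ
    have c2 : ContinuousAt (fun x => ((matP h g x)ᵀ * Matrix.diagonal (fun j => g j x) *
        (R2 x * Matrix.diagonal (fun j => g j x) - Matrix.diagonal (fun j => a j x))).mulVec
          (vecv θ h g x)) xs :=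
      ca_mulVec (ca_mul (ca_mul (ca_transpose cP) (ca_diagonal cgv))
        ((ca_mul cR2 (ca_diagonal cgv)).sub (ca_diagonal cav))) cv
    have c3 : ContinuousAt (fun x => ((matP h g x)ᵀ * matR3 b c p x (vecv θ h g x)).mulVec
        (pPart (vecv θ h g x))) xs :=
      ca_mulVec (ca_mul (ca_transpose cP) cR3) cvp
    exact (c1.neg.sub c2).sub c3
  exact ca_dotProduct cgθ cF

end continuity

/-- Global convergence of the descent algorithm (core of Theorem 3.1): under the stated
step-size and descent conditions, every accumulation point of the sequence `(x_i)`
is a KKT point. Here `dist(x, Φ̃) ≥ η` is expressed as `η ≤ |x − y|` (Euclidean) for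
all `y ∈ Φ̃ = {y ∈ Φ : θ(y) ≤ θ(x₀)}`. -/
theorem stmt_17
    {n m k : ℕ} (hmn : m < n)
    (θ : (Fin n → ℝ) → ℝ) (h : Fin m → (Fin n → ℝ) → ℝ) (g : Fin k → (Fin n → ℝ) → ℝ)
    (hθ : ContDiff ℝ 2 θ) (hhC : ∀ i, ContDiff ℝ 2 (h i)) (hgC : ∀ j, ContDiff ℝ 2 (g j))
    (hH1 : hypH1 θ h g) (hH2 : hypH2 h g)
    (R1 : (Fin n → ℝ) → Matrix (Fin n) (Fin n) ℝ)
    (R2 : (Fin n → ℝ) → Matrix (Fin k) (Fin k) ℝ)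
    (a b c : Fin k → (Fin n → ℝ) → ℝ) (p : Fin k → ℕ)
    (hR1C : ∀ i j, ContDiff ℝ 1 fun x => R1 x i j)
    (hR1pd : ∀ x, (R1 x).PosDef)
    (hR2C : ∀ i j, ContDiff ℝ 1 fun x => R2 x i j)
    (hR2psd : ∀ x, (R2 x).PosSemidef)
    (haC : ∀ j, ContDiff ℝ 1 (a j)) (hbC : ∀ j, ContDiff ℝ 1 (b j))
    (hcC : ∀ j, ContDiff ℝ 1 (c j))
    (ha0 : ∀ j x, 0 ≤ a j x) (hb0 : ∀ j x, 0 ≤ b j x) (hc0 : ∀ j x, 0 ≤ c j x)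
    (hbc : ∀ x ∈ feas h g, ∀ j, 0 < b j x + c j x)
    (hpd : ∀ x ∈ feas h g, (R2 x).PosDef ∨ (Matrix.diagonal fun j => a j x).PosDef)
    (hp : ∀ j, 1 ≤ p j)
    (lam : ℝ) (hlam : 0 < lam ∧ lam < 1) (r : ℝ) (hr : 0 < r)
    (x₀ : Fin n → ℝ) (hx₀ : x₀ ∈ feas h g)
    (hPhit : {y ∈ KKTset θ h g | θ y ≤ θ x₀}.Nonempty)
    (x : ℕ → (Fin n → ℝ)) (hxS : ∀ i, x i ∈ feas h g)
    (hxlev : ∀ i, θ (x i) ≤ θ x₀)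
    (s : ℕ → ℝ) (hs : ∀ i, s i ∈ Set.Icc (0 : ℝ) r)
    (hdesc : ∀ i, θ (x (i + 1)) ≤ θ (x i) +
      lam * s i * (grad θ (x i) ⬝ᵥ vecF θ h g R1 R2 a b c p (x i)))
    (hstep : ∀ η : ℝ, 0 < η → ∃ δ : ℝ, 0 < δ ∧ ∀ i : ℕ,
      x i ∉ KKTset θ h g →
      (∀ y ∈ {y ∈ KKTset θ h g | θ y ≤ θ x₀},
        η ≤ Real.sqrt (∑ j, (x i j - y j) ^ 2)) →
      δ ≤ s i) :
    ∀ xstar : Fin n → ℝ,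
      (∃ φ : ℕ → ℕ, StrictMono φ ∧
        Filter.Tendsto (fun i => x (φ i)) Filter.atTop (nhds xstar)) →
      xstar ∈ KKTset θ h g := by
  rintro xstar ⟨φ, hφ, hconv⟩
  -- xstar is feasible
  have hxsfeas : xstar ∈ feas h g := by
    constructor
    · intro i
      have hT : Filter.Tendsto (fun t => h i (x (φ t))) Filter.atTop (nhds (h i xstar)) :=
        ((hhC i).continuous.tendsto xstar).comp hconv
      have heq : (fun t => h i (x (φ t))) = fun _ => (0 : ℝ) :=
        funext fun t => (hxS (φ t)).1 i
      rw [heq] at hT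
      exact (tendsto_nhds_unique hT tendsto_const_nhds)
    · intro j
      have hT : Filter.Tendsto (fun t => g j (x (φ t))) Filter.atTop (nhds (g j xstar)) :=
        ((hgC j).continuous.tendsto xstar).comp hconv
      exact le_of_tendsto hT (Filter.Eventually.of_forall fun t => (hxS (φ t)).2 j)
  have hθlim : Filter.Tendsto (fun t => θ (x (φ t))) Filter.atTop (nhds (θ xstar)) :=
    (hθ.continuous.tendsto xstar).comp hconv
  -- key pointwise facts
  have hQpd : ∀ y ∈ feas h g, (matQ h g y).PosDef := fun y hy => Q_posdef hy (hH2 y hy)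
  have hdA : ∀ y ∈ feas h g, IsUnit (matA h y * (matA h y)ᵀ).det :=
    fun y hy => (gram_posdef (hH2 y hy)).det_pos.ne'.isUnit
  have hGle : ∀ y ∈ feas h g, grad θ y ⬝ᵥ vecF θ h g R1 R2 a b c p y ≤ 0 :=
    fun y hy => G_nonpos θ R1 R2 a b c p hy (hQpd y hy) (hR1pd y).posSemidef (hR2psd y)
      (fun j => ha0 j y) (fun j => hb0 j y) (fun j => hc0 j y)
  have hGKKT : ∀ y ∈ KKTset θ h g, grad θ y ⬝ᵥ vecF θ h g R1 R2 a b c p y = 0 :=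
    fun y hy => KKT_G_zero θ R1 R2 a b c p (hQpd y hy.1) (hdA y hy.1) hy
  by_contra hxsK
  -- G xstar < 0
  have hGxs : grad θ xstar ⬝ᵥ vecF θ h g R1 R2 a b c p xstar < 0 := by
    rcases lt_or_eq_of_le (hGle xstar hxsfeas) with hlt | heq
    · exact hlt
    · exact absurd (G_zero_KKT θ R1 R2 a b c p hxsfeas (hQpd xstar hxsfeas)
        (hdA xstar hxsfeas) (hR1pd xstar) (hR2psd xstar) (fun j => ha0 j xstar)
        (fun j => hb0 j xstar) (fun j => hc0 j xstar) (fun j => hbc xstar hxsfeas j)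
        (hpd xstar hxsfeas) heq) hxsK
  set β := -(grad θ xstar ⬝ᵥ vecF θ h g R1 R2 a b c p xstar) / 2 with hβ
  have hβpos : 0 < β := by rw [hβ]; linarith
  -- continuity of G at xstar
  have hGcont : ContinuousAt (fun y => grad θ y ⬝ᵥ vecF θ h g R1 R2 a b c p y) xstar :=
    G_continuousAt hθ hhC hgC hR1C hR2C haC hbC hcC
      ((gram_posdef (hH2 xstar hxsfeas)).det_pos.ne')
      ((hQpd xstar hxsfeas).det_pos.ne')
  have hU : {y | grad θ y ⬝ᵥ vecF θ h g R1 R2 a b c p y < -β} ∈ nhds xstar :=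
    hGcont.preimage_mem_nhds (Iio_mem_nhds (by rw [hβ]; linarith))
  -- Euclidean distance
  set T : (Fin n → ℝ) → EuclideanSpace ℝ (Fin n) := ⇑(EuclideanSpace.equiv (Fin n) ℝ).symm
    with hT
  have hTj : ∀ u j, T u j = u j := fun _ _ => rfl
  have hDeq : ∀ u w : Fin n → ℝ, Real.sqrt (∑ j, (u j - w j) ^ 2) = dist (T u) (T w) := by
    intro u w
    rw [EuclideanSpace.dist_eq]
    congr 1
    refine Finset.sum_congr rfl fun j _ => ?_
    rw [hTj, hTj, Real.dist_eq, sq_abs]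
  have hTcont : Continuous T := (EuclideanSpace.equiv (Fin n) ℝ).symm.continuous
  have hTscont : Continuous (⇑(EuclideanSpace.equiv (Fin n) ℝ)) :=
    (EuclideanSpace.equiv (Fin n) ℝ).continuous
  -- ball inside U
  have hV : (⇑(EuclideanSpace.equiv (Fin n) ℝ)) ⁻¹'
      {y | grad θ y ⬝ᵥ vecF θ h g R1 R2 a b c p y < -β} ∈ nhds (T xstar) := by
    refine hTscont.continuousAt.preimage_mem_nhds ?_
    have : (EuclideanSpace.equiv (Fin n) ℝ) (T xstar) = xstar := by
      rw [hT]; exact (EuclideanSpace.equiv (Fin n) ℝ).apply_symm_apply xstar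
    rw [this]
    exact hU
  obtain ⟨ε, hεpos, hball⟩ := Metric.mem_nhds_iff.mp hV
  have hball' : ∀ y : Fin n → ℝ, dist (T y) (T xstar) < ε →
      grad θ y ⬝ᵥ vecF θ h g R1 R2 a b c p y < -β := by
    intro y hy
    have hmem := hball (Metric.mem_ball.mpr hy)
    have : (EuclideanSpace.equiv (Fin n) ℝ) (T y) = y := by
      rw [hT]; exact (EuclideanSpace.equiv (Fin n) ℝ).apply_symm_apply y
    simpa [this] using hmem
  -- KKT points in the level set are far from xstar
  have hfar : ∀ y ∈ {y ∈ KKTset θ h g | θ y ≤ θ x₀}, ε ≤ dist (T y) (T xstar) := by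
    intro y hy
    by_contra hlt
    push_neg at hlt
    have := hball' y hlt
    rw [hGKKT y hy.1] at this
    linarith
  -- eventually the subsequence is within ε/2
  have hDconv : Filter.Tendsto (fun t => dist (T (x (φ t))) (T xstar)) Filter.atTop
      (nhds 0) := by
    have : Filter.Tendsto (fun t => T (x (φ t))) Filter.atTop (nhds (T xstar)) :=
      (hTcont.tendsto xstar).comp hconv
    exact tendsto_iff_dist_tendsto_zero.mp this
  have hev : ∀ᶠ t in Filter.atTop, dist (T (x (φ t))) (T xstar) < ε / 2 := by
    have := hDconv (Iio_mem_nhds (by linarith : (0:ℝ) < ε / 2))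
    simpa using this
  -- step size bound
  obtain ⟨δ, hδpos, hδ⟩ := hstep (ε / 2) (by linarith)
  -- monotonicity of θ ∘ x
  have hanti : Antitone fun i => θ (x i) := by
    refine antitone_nat_of_succ_le fun i => ?_
    have h1 := hdesc i
    have h2 := hGle (x i) (hxS i)
    have h3 := (hs i).1
    have h4 : 0 ≤ lam * s i := mul_nonneg hlam.1.le h3
    nlinarith [mul_nonneg h4 (neg_nonneg.mpr h2)]
  -- θ ∘ x converges to θ xstar
  have hφle : ∀ i, i ≤ φ i := fun i => hφ.le_apply
  have hLles : ∀ i, θ xstar ≤ θ (x (φ i)) :=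
    (hanti.comp_monotone hφ.monotone).le_of_tendsto hθlim
  have hbdd : BddBelow (Set.range fun i => θ (x i)) := by
    refine ⟨θ xstar, ?_⟩
    rintro _ ⟨i, rfl⟩
    exact le_trans (hLles i) (hanti (hφle i))
  have htinf : Filter.Tendsto (fun i => θ (x i)) Filter.atTop
      (nhds (⨅ i, θ (x i))) := tendsto_atTop_ciInf hanti hbdd
  have hinf_eq : (⨅ i, θ (x i)) = θ xstar := by
    have hsub : Filter.Tendsto (fun t => θ (x (φ t))) Filter.atTop
        (nhds (⨅ i, θ (x i))) := htinf.comp hφ.tendsto_atTop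
    exact tendsto_nhds_unique hsub hθlim
  rw [hinf_eq] at htinf
  -- eventual strict decrease
  have hkey : ∀ᶠ t in Filter.atTop,
      θ (x (φ t + 1)) ≤ θ (x (φ t)) - lam * δ * β := by
    filter_upwards [hev] with t ht
    have hGt : grad θ (x (φ t)) ⬝ᵥ vecF θ h g R1 R2 a b c p (x (φ t)) < -β := by
      apply hball'
      linarith
    have hnotK : x (φ t) ∉ KKTset θ h g := by
      intro hK
      have := hGKKT (x (φ t)) hK
      rw [this] at hGt
      linarith
    have hfar' : ∀ y ∈ {y ∈ KKTset θ h g | θ y ≤ θ x₀},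
        ε / 2 ≤ Real.sqrt (∑ j, (x (φ t) j - y j) ^ 2) := by
      intro y hy
      rw [hDeq]
      have h1 := hfar y hy
      have h2 := dist_triangle (T y) (T (x (φ t))) (T xstar)
      have h3 : dist (T (x (φ t))) (T y) = dist (T y) (T (x (φ t))) := dist_comm _ _
      linarith
    have hst := hδ (φ t) hnotK hfar'
    have h1 := hdesc (φ t)
    have hspos : 0 < s (φ t) := lt_of_lt_of_le hδpos hst
    have e1 : lam * s (φ t) * (grad θ (x (φ t)) ⬝ᵥ vecF θ h g R1 R2 a b c p (x (φ t)))
        ≤ lam * s (φ t) * (-β) :=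
      mul_le_mul_of_nonneg_left hGt.le (mul_nonneg hlam.1.le hspos.le)
    have e2 : lam * δ * β ≤ lam * s (φ t) * β := by
      have := mul_le_mul_of_nonneg_right hst hβpos.le
      nlinarith [hlam.1]
    linarith
  -- take limits
  have hlim1 : Filter.Tendsto (fun t => θ (x (φ t + 1))) Filter.atTop (nhds (θ xstar)) :=
    htinf.comp ((tendsto_add_atTop_nat 1).comp hφ.tendsto_atTop)
  have hlim2 : Filter.Tendsto (fun t => θ (x (φ t)) - lam * δ * β) Filter.atTop
      (nhds (θ xstar - lam * δ * β)) :=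
    (htinf.comp hφ.tendsto_atTop).sub tendsto_const_nhds
  have hfinal : θ xstar ≤ θ xstar - lam * δ * β :=
    le_of_tendsto_of_tendsto hlim1 hlim2 hkey
  nlinarith [mul_pos (mul_pos hlam.1 hδpos) hβpos]


end
end

section
/- Step-size feasibility estimate (key inequality of Remark 3.5): Let g ≤ 0, ω ∈ ℝ, M ≥ 0, β ≥ 0, q > 0, Q > 0, r > 0, and K ∈ ℝ with K ≤ −g·q + Q·β·M. Then for every s with 0 ≤ s ≤ min(r, (ω + √(ω² + 2q))/q, 2/Q), it holds that g + s(g·ω − β·M) + (s²/2)·K ≤ 0. (Applied with g = g_j(x) ≤ 0, ω = ω_j(x), M = max(0, v_j(x)), β = b_j(x) + c_j(x)(max(0, v_j(x)))^{2p_j}, and K a Taylor remainder bound K_j(x) satisfying g_j(x + sF(x)) ≤ g_j(x) + s∇g_j(x)F(x) + (s²/2)K_j(x) together with the identity ∇g_j(x)F(x) = g_j(x)ω_j(x) − β·M, this yields that g_j(x + sF(x)) ≤ 0 for all step sizes s in the stated range, which is inequality (3.14) under condition (3.15).) -/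
/-- Step-size feasibility estimate (key inequality of Remark 3.5): if `g ≤ 0`, `M ≥ 0`,
`β ≥ 0`, `q > 0`, `Q > 0`, `r > 0` and `K ≤ −g·q + Q·β·M`, then for every
`0 ≤ s ≤ min(r, (ω + √(ω² + 2q))/q, 2/Q)` one has
`g + s(g·ω − β·M) + (s²/2)·K ≤ 0`. -/
theorem stmt_19 (g ω M β q Q r K : ℝ)
    (hg : g ≤ 0) (hM : 0 ≤ M) (hβ : 0 ≤ β) (hq : 0 < q) (hQ : 0 < Q) (hr : 0 < r)
    (hK : K ≤ -g * q + Q * β * M) :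
    ∀ s : ℝ, 0 ≤ s →
      s ≤ min r (min ((ω + Real.sqrt (ω ^ 2 + 2 * q)) / q) (2 / Q)) →
      g + s * (g * ω - β * M) + s ^ 2 / 2 * K ≤ 0 := by
  intro s hs hmin
  set t := Real.sqrt (ω ^ 2 + 2 * q) with ht
  have ht2 : t ^ 2 = ω ^ 2 + 2 * q := Real.sq_sqrt (by positivity)
  have ht0 : 0 ≤ t := Real.sqrt_nonneg _
  have hωt : ω - t ≤ 0 := by nlinarith [le_abs_self ω, sq_abs ω, abs_nonneg ω]
  have h1 : s ≤ (ω + t) / q := le_trans hmin ((min_le_right _ _).trans (min_le_left _ _))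
  have h2 : s ≤ 2 / Q := le_trans hmin ((min_le_right _ _).trans (min_le_right _ _))
  have h1' : s * q ≤ ω + t := (le_div_iff₀ hq).mp h1
  have h2' : s * Q ≤ 2 := (le_div_iff₀ hQ).mp h2
  have hA : 0 ≤ (ω + t - q * s) * (q * s - (ω - t)) := by
    apply mul_nonneg <;> nlinarith [mul_nonneg hs hq.le]
  have hP : 0 ≤ 1 + s * ω - s ^ 2 * q / 2 := by nlinarith
  have hPg : g * (1 + s * ω - s ^ 2 * q / 2) ≤ 0 := mul_nonpos_of_nonpos_of_nonneg hg hP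
  have hB : β * M * (s ^ 2 * Q / 2 - s) ≤ 0 := by
    apply mul_nonpos_of_nonneg_of_nonpos (mul_nonneg hβ hM)
    nlinarith
  have hC : s ^ 2 / 2 * (K - (-g * q + Q * β * M)) ≤ 0 :=
    mul_nonpos_of_nonneg_of_nonpos (by positivity) (by linarith)
  nlinarith
end
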